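/- In the setting of the previous example (L = L^p, M = {-z + E_{Q⁰}[z] : z ∈ L₊} - L₊), the superhedging cost ρ⁰ fails the Fatou property: there exists z ∈ L₊ unbounded above with ρ⁰(-z) = ∞, but zₙ := z ∧ n increases to z and ρ⁰(-zₙ) ≤ E_{Q⁰}[zₙ] → E_{Q⁰}[z] < ∞. -/

import Mathlib

noncomputable section
open MeasureTheory Filter Topology
open scoped ENNReal

/-- The superhedging cost `ρ⁰(x) = inf {c ∈ ℝ : ∃ m ∈ M, c + m + x ≥ 0 a.s.}`. -/
def supCost {Ω : Type*} [MeasurableSpace Ω] (μ : MeasureTheory.Measure Ω)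
    (M : Set (Ω → ℝ)) (x : Ω → ℝ) : EReal :=
  sInf {c : EReal | ∃ r : ℝ, c = (r : EReal) ∧ ∃ m ∈ M, ∀ᵐ ω ∂μ, 0 ≤ r + m ω + x ω}

/-- The market of Example 2.1: `M = {-z + E_{Q⁰}[z] : z ∈ L^p₊} - L^p₊`. -/
def exMarket {Ω : Type*} [MeasurableSpace Ω] (μ : MeasureTheory.Measure Ω)
    (p : ℝ≥0∞) (d0 : Ω → ℝ) : Set (Ω → ℝ) :=
  {m | ∃ z w : Ω → ℝ, MeasureTheory.MemLp z p μ ∧ 0 ≤ᵐ[μ] z ∧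
    MeasureTheory.MemLp w p μ ∧ 0 ≤ᵐ[μ] w ∧
    m = fun ω => (-(z ω) + ∫ ω', d0 ω' * z ω' ∂μ) - w ω}

/-- in the setting of Example 2.1 the superhedging cost fails the Fatou
property: for `z ∈ L^p₊` unbounded from above, `ρ⁰(-z) = ∞`, while `zₙ := z ∧ n`
increases to `z` and `ρ⁰(-zₙ) ≤ E_{Q⁰}[zₙ] → E_{Q⁰}[z] < ∞`. -/
theorem stmt_7 {Ω : Type*} [MeasurableSpace Ω] (μ : MeasureTheory.Measure Ω)
    [MeasureTheory.IsProbabilityMeasure μ]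
    (p q : ℝ≥0∞) (hp : 1 ≤ p) (hp' : p ≠ ⊤) (hpq : p⁻¹ + q⁻¹ = 1)
    (d0 : Ω → ℝ) (hd0mem : MeasureTheory.MemLp d0 q μ)
    (hd0pos : 0 ≤ᵐ[μ] d0) (hd0mass : (∫ ω, d0 ω ∂μ) = 1)
    (z : Ω → ℝ) (hz : MeasureTheory.MemLp z p μ) (hzpos : 0 ≤ᵐ[μ] z)
    (hub : ∀ C : ℝ, ¬ (z ≤ᵐ[μ] fun _ => C)) :
    supCost μ (exMarket μ p d0) (-z) = ⊤ ∧
    (∀ ω, Monotone fun n : ℕ => min (z ω) n) ∧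
    (∀ ω, Tendsto (fun n : ℕ => min (z ω) n) atTop (nhds (z ω))) ∧
    (∀ n : ℕ, supCost μ (exMarket μ p d0) (fun ω => -(min (z ω) n)) ≤
      (↑(∫ ω, d0 ω * min (z ω) n ∂μ) : EReal)) ∧
    Tendsto (fun n : ℕ => ∫ ω, d0 ω * min (z ω) n ∂μ) atTop
      (nhds (∫ ω, d0 ω * z ω ∂μ)) := by
  have hq1 : (1 : ℝ≥0∞) ≤ q := by
    rw [← ENNReal.inv_le_one]
    calc q⁻¹ ≤ p⁻¹ + q⁻¹ := le_add_self
    _ = 1 := hpq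
  have hd0int : Integrable d0 μ := hd0mem.integrable hq1
  -- measurability of the truncations
  have hzm : AEStronglyMeasurable z μ := hz.aestronglyMeasurable
  have hznm : ∀ n : ℕ, AEStronglyMeasurable (fun ω => min (z ω) n) μ := fun n =>
    (hzm.aemeasurable.min aemeasurable_const).aestronglyMeasurable
  -- integrability of d0 * (z ∧ n)
  have hd0zn_int : ∀ n : ℕ, Integrable (fun ω => d0 ω * min (z ω) n) μ := by
    intro n
    have hb : ∀ᵐ ω ∂μ, ‖min (z ω) (n:ℝ)‖ ≤ (n:ℝ) := by
      filter_upwards [hzpos] with ω hω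
      rw [Real.norm_eq_abs, abs_of_nonneg (le_min hω n.cast_nonneg)]
      exact min_le_right _ _
    have h := Integrable.bdd_mul (f := fun ω => min (z ω) (n:ℝ)) (c := n) hd0int (hznm n) hb
    exact h.congr (by filter_upwards with ω using mul_comm _ _)
  -- integrability of d0 * z via Hölder
  have hd0z_int : Integrable (fun ω => d0 ω * z ω) μ := by
    have := hz.smul (r := 1) hd0mem (hpqr := ⟨by
      simp only [one_div, inv_one]
      rw [add_comm]
      exact hpq⟩)
    exact this.integrable le_rfl
  refine ⟨?_, ?_, ?_, ?_, ?_⟩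
  · -- supCost = ⊤
    rw [supCost]
    convert sInf_empty using 2
    · rfl
    rw [Set.eq_empty_iff_forall_notMem]
    rintro c ⟨r, -, m, ⟨z', w, hz', hz'pos, hw, hwpos, rfl⟩, hae⟩
    refine hub (r + ∫ ω', d0 ω' * z' ω' ∂μ) ?_
    filter_upwards [hae, hz'pos, hwpos] with ω h1 h2 h3
    simp only [Pi.neg_apply] at h1
    simp only [Pi.zero_apply] at h2 h3
    linarith
  · intro ω m n hmn
    exact min_le_min le_rfl (Nat.cast_le.mpr hmn)
  · intro ω
    refine Tendsto.congr' ?_ tendsto_const_nhds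
    filter_upwards [eventually_ge_atTop ⌈z ω⌉₊] with n hn
    exact (min_eq_left ((Nat.le_ceil _).trans (Nat.cast_le.mpr hn))).symm
  · intro n
    set r : ℝ := ∫ ω, d0 ω * min (z ω) n ∂μ with hr
    have hmem : MemLp (fun ω => (n : ℝ) - min (z ω) n) p μ := by
      refine MemLp.of_bound ((aestronglyMeasurable_const.sub (hznm n))) n ?_
      filter_upwards [hzpos] with ω hω
      rw [Real.norm_eq_abs, abs_of_nonneg (by simp [min_le_right])]
      have : 0 ≤ min (z ω) n := le_min hω n.cast_nonneg
      linarith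
    refine sInf_le ⟨r, rfl, fun ω => (-((n : ℝ) - min (z ω) n) +
        ∫ ω', d0 ω' * ((n : ℝ) - min (z ω') n) ∂μ) - (fun _ => (0:ℝ)) ω, ?_, ?_⟩
    · exact ⟨fun ω => (n : ℝ) - min (z ω) n, fun _ => 0, hmem,
        Eventually.of_forall (fun ω => by simp [min_le_right]),
        memLp_const 0, Eventually.of_forall (fun _ => le_rfl), rfl⟩
    · have hint : (∫ ω', d0 ω' * ((n : ℝ) - min (z ω') n) ∂μ) = n - r := by
        have h1 : (fun ω' => d0 ω' * ((n : ℝ) - min (z ω') n)) =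
            fun ω' => d0 ω' * n - d0 ω' * min (z ω') n := by
          funext ω'; ring
        rw [h1, integral_sub (hd0int.mul_const _) (hd0zn_int n),
          integral_mul_const, hd0mass, one_mul, hr]
      filter_upwards with ω
      rw [hint]
      ring_nf
      simp
  · -- dominated convergence
    refine tendsto_integral_of_dominated_convergence
      (fun ω => ‖d0 ω * z ω‖) (fun n => (hd0zn_int n).aestronglyMeasurable)
      hd0z_int.norm ?_ ?_
    · intro n
      filter_upwards [hzpos, hd0pos] with ω hω hd
      rw [Real.norm_eq_abs, Real.norm_eq_abs, abs_mul, abs_mul,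
        abs_of_nonneg hd, abs_of_nonneg hω, abs_of_nonneg (le_min hω n.cast_nonneg)]
      exact mul_le_mul_of_nonneg_left (min_le_left _ _) hd
    · filter_upwards with ω
      exact Tendsto.const_mul _ (by
        refine Tendsto.congr' ?_ tendsto_const_nhds
        filter_upwards [eventually_ge_atTop ⌈z ω⌉₊] with n hn
        exact (min_eq_left ((Nat.le_ceil _).trans (Nat.cast_le.mpr hn))).symm)
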